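/- Let R be a commutative ring, p a natural number, a ∈ R, and α a unit of R with α² − a·α + p·1 = 0 in R. Let M, N, P be R-modules, and let ν : M → N, t : N → M, t' : P → N be R-linear maps such that ν ∘ t = p·id_N. Suppose θ_M ∈ M, θ_N ∈ N, θ_P ∈ P satisfy the norm relation ν(θ_M) = a·θ_N − t'(θ_P). Then ν(θ_M − α⁻¹·t(θ_N)) = α·(θ_N − α⁻¹·t'(θ_P)); consequently, for every k ≥ 0, ν(α^{−(k+1)}·(θ_M − α⁻¹·t(θ_N))) = α^{−k}·(θ_N − α⁻¹·t'(θ_P)). -/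

import Mathlib

/-- **Norm compatibility of `S`-refined Mazur–Tate elements (abstract form).**
Let `R` be a commutative ring, `p ∈ ℕ`, `a ∈ R`, and `α ∈ Rˣ` with
`α² - aα + p = 0`.  Let `ν : M → N`, `t : N → M`, `t' : P → N` be `R`-linear maps
with `ν ∘ t = p · id`.  If `θ_M, θ_N, θ_P` satisfy the norm relation
`ν(θ_M) = a·θ_N - t'(θ_P)`, then `ν(θ_M - α⁻¹·t(θ_N)) = α·(θ_N - α⁻¹·t'(θ_P))`,
and consequently
`ν(α^{-(k+1)}·(θ_M - α⁻¹·t(θ_N))) = α^{-k}·(θ_N - α⁻¹·t'(θ_P))` for all `k ≥ 0`. -/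
theorem refined_mazur_tate_norm_compatible (R : Type*) [CommRing R]
    (p : ℕ) (a : R) (α : Rˣ) (hα : (α : R) ^ 2 - a * (α : R) + (p : R) = 0)
    (M N P : Type*) [AddCommGroup M] [AddCommGroup N] [AddCommGroup P]
    [Module R M] [Module R N] [Module R P]
    (ν : M →ₗ[R] N) (t : N →ₗ[R] M) (t' : P →ₗ[R] N)
    (hνt : ∀ n : N, ν (t n) = (p : R) • n)
    (θM : M) (θN : N) (θP : P)
    (hrel : ν θM = a • θN - t' θP) :
    ν (θM - ((α⁻¹ : Rˣ) : R) • t θN)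
      = (α : R) • (θN - ((α⁻¹ : Rˣ) : R) • t' θP) ∧
    ∀ k : ℕ, ν ((((α⁻¹ : Rˣ) : R) ^ (k + 1)) • (θM - ((α⁻¹ : Rˣ) : R) • t θN))
      = (((α⁻¹ : Rˣ) : R) ^ k) • (θN - ((α⁻¹ : Rˣ) : R) • t' θP) := by
  have hp : (p : R) = a * (α : R) - (α : R) ^ 2 := by linear_combination hα
  have key : ν (θM - ((α⁻¹ : Rˣ) : R) • t θN)
      = (α : R) • (θN - ((α⁻¹ : Rˣ) : R) • t' θP) := by
    rw [map_sub, map_smul, hνt, hrel, smul_sub, smul_smul, smul_smul, hp]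
    have h1 : ((α⁻¹ : Rˣ) : R) * (a * (α : R) - (α : R) ^ 2) = a - (α : R) := by
      have := α.inv_mul
      linear_combination (a - (α : R)) * this
    rw [h1, sub_smul, sub_sub_sub_cancel_left]
    have h2 : (α : R) * ((α⁻¹ : Rˣ) : R) = 1 := α.mul_inv
    rw [h2, one_smul]
  refine ⟨key, fun k => ?_⟩
  rw [pow_succ, mul_comm, mul_smul, map_smul, map_smul, key, smul_smul, smul_smul]
  congr 1
  rw [mul_comm (((α⁻¹ : Rˣ) : R)), mul_assoc, α.inv_mul, mul_one]
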